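/- arXiv:1601.03196 — 6 statements merged into one kernel-verified Lean document; each statement's English description precedes it below -/
import Mathlib

section
/- Let Q ∈ ℝ² and let n ∈ ℝ² be a unit vector with ⟨n,Q⟩ > 0. Let u ∈ ℝ² be a unit vector with σ_a := Q₁u₂ − Q₂u₁ > 0, and let u' := u − 2⟨u,n⟩·n be the billiard reflection of u in the line through Q with unit normal n; assume σ_b := Q₁u'₂ − Q₂u'₁ > 0. Define the dual points A := (u₂, −u₁)/σ_a, B := (u'₂, −u'₁)/σ_b, and L := n/⟨n,Q⟩. Then ⟨A,Q⟩ = 1, ⟨B,Q⟩ = 1 and ⟨L,Q⟩ = 1 (so A, B, L all lie on the line {x : ⟨Q,x⟩ = 1}), and ⟨A,L⟩/(‖A‖·‖L‖) = ⟨B,L⟩/(‖B‖·‖L‖) (the angles ∠AOL and ∠BOL at the origin O are equal). -/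
/-- Under polar duality w.r.t. the unit circle, the Birkhoff billiard
reflection at a boundary point `Q` corresponds to the Angular billiard rule:
the dual points `A`, `B` of the incoming/outgoing lines and the dual point `L`
of the tangent line all lie on the line `{x : ⟨Q,x⟩ = 1}`, and the angles
`∠AOL` and `∠BOL` at the origin are equal. -/
theorem stmt0 (Q₁ Q₂ n₁ n₂ u₁ u₂ : ℝ)
    (hn : n₁ ^ 2 + n₂ ^ 2 = 1) (hnQ : n₁ * Q₁ + n₂ * Q₂ > 0)
    (hu : u₁ ^ 2 + u₂ ^ 2 = 1)
    (σa : ℝ) (hσa : σa = Q₁ * u₂ - Q₂ * u₁) (hσapos : σa > 0)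
    (u₁' u₂' : ℝ)
    (hu₁' : u₁' = u₁ - 2 * (u₁ * n₁ + u₂ * n₂) * n₁)
    (hu₂' : u₂' = u₂ - 2 * (u₁ * n₁ + u₂ * n₂) * n₂)
    (σb : ℝ) (hσb : σb = Q₁ * u₂' - Q₂ * u₁') (hσbpos : σb > 0)
    (A₁ A₂ B₁ B₂ L₁ L₂ : ℝ)
    (hA₁ : A₁ = u₂ / σa) (hA₂ : A₂ = -u₁ / σa)
    (hB₁ : B₁ = u₂' / σb) (hB₂ : B₂ = -u₁' / σb)
    (hL₁ : L₁ = n₁ / (n₁ * Q₁ + n₂ * Q₂)) (hL₂ : L₂ = n₂ / (n₁ * Q₁ + n₂ * Q₂)) :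
    A₁ * Q₁ + A₂ * Q₂ = 1 ∧ B₁ * Q₁ + B₂ * Q₂ = 1 ∧ L₁ * Q₁ + L₂ * Q₂ = 1 ∧
    (A₁ * L₁ + A₂ * L₂) / (Real.sqrt (A₁ ^ 2 + A₂ ^ 2) * Real.sqrt (L₁ ^ 2 + L₂ ^ 2)) =
      (B₁ * L₁ + B₂ * L₂) / (Real.sqrt (B₁ ^ 2 + B₂ ^ 2) * Real.sqrt (L₁ ^ 2 + L₂ ^ 2)) := by
  have hσa0 : σa ≠ 0 := ne_of_gt hσapos
  have hσb0 : σb ≠ 0 := ne_of_gt hσbpos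
  set p := n₁ * Q₁ + n₂ * Q₂ with hp
  have hp0 : p ≠ 0 := ne_of_gt hnQ
  have hu' : u₁' ^ 2 + u₂' ^ 2 = 1 := by subst hu₁' hu₂'; linear_combination hu + 4*(u₁*n₁+u₂*n₂)^2*hn
  have hA : A₁ ^ 2 + A₂ ^ 2 = (1 / σa) ^ 2 := by
    subst hA₁ hA₂; field_simp; linarith [hu]
  have hB : B₁ ^ 2 + B₂ ^ 2 = (1 / σb) ^ 2 := by
    subst hB₁ hB₂; field_simp; linarith [hu']
  have hL : L₁ ^ 2 + L₂ ^ 2 = (1 / p) ^ 2 := by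
    subst hL₁ hL₂; field_simp; linarith [hn]
  have hsA : Real.sqrt (A₁ ^ 2 + A₂ ^ 2) = 1 / σa := by
    rw [hA, Real.sqrt_sq (by positivity)]
  have hsB : Real.sqrt (B₁ ^ 2 + B₂ ^ 2) = 1 / σb := by
    rw [hB, Real.sqrt_sq (by positivity)]
  have hsL : Real.sqrt (L₁ ^ 2 + L₂ ^ 2) = 1 / p := by
    rw [hL, Real.sqrt_sq (by positivity)]
  refine ⟨?_, ?_, ?_, ?_⟩
  · subst hA₁ hA₂; field_simp; linarith [hσa]
  · subst hB₁ hB₂; field_simp; linarith [hσb]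
  · subst hL₁ hL₂; field_simp; exact hp.symm
  · have key : u₂' * n₁ - u₁' * n₂ = u₂ * n₁ - u₁ * n₂ := by
      subst hu₁' hu₂'; ring
    rw [hsA, hsB, hsL,
      div_eq_div_iff (by positivity) (by positivity), hA₁, hA₂, hB₁, hB₂, hL₁, hL₂]
    field_simp
    linear_combination -key
end

section
/- Let δ, r, ρ, r₁, r₂, a, b be real numbers with r ≠ 0, and suppose that in ℂ one has r₁·e^{−iδ} = r + a·(ρ + i·r) and r₂·e^{iδ} = r + b·(ρ + i·r). Then r·cos δ + ρ·sin δ ≠ 0 and r·cos δ − ρ·sin δ ≠ 0, and: a = −r·sin δ/(r·cos δ + ρ·sin δ), r₁ = r²/(r·cos δ + ρ·sin δ), b = r·sin δ/(r·cos δ − ρ·sin δ), r₂ = r²/(r·cos δ − ρ·sin δ). -/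
open Complex in
/-- equations (3) of the paper: solving the complex tangency
equations `r₁e^{−iδ} = r + a(ρ + ir)` and `r₂e^{iδ} = r + b(ρ + ir)` for
`a, b, r₁, r₂`. -/
theorem stmt5 (δ r ρ r₁ r₂ a b : ℝ) (hr : r ≠ 0)
    (h1 : (r₁ : ℂ) * Complex.exp (-(δ : ℂ) * Complex.I) =
      (r : ℂ) + (a : ℂ) * ((ρ : ℂ) + Complex.I * (r : ℂ)))
    (h2 : (r₂ : ℂ) * Complex.exp ((δ : ℂ) * Complex.I) =
      (r : ℂ) + (b : ℂ) * ((ρ : ℂ) + Complex.I * (r : ℂ))) :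
    r * Real.cos δ + ρ * Real.sin δ ≠ 0 ∧
    r * Real.cos δ - ρ * Real.sin δ ≠ 0 ∧
    a = -(r * Real.sin δ) / (r * Real.cos δ + ρ * Real.sin δ) ∧
    r₁ = r ^ 2 / (r * Real.cos δ + ρ * Real.sin δ) ∧
    b = r * Real.sin δ / (r * Real.cos δ - ρ * Real.sin δ) ∧
    r₂ = r ^ 2 / (r * Real.cos δ - ρ * Real.sin δ) := by
  simp only [Complex.ext_iff, Complex.add_re, Complex.add_im, Complex.mul_re, Complex.mul_im,
    Complex.exp_re, Complex.exp_im, Complex.ofReal_re, Complex.ofReal_im, Complex.I_re,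
    Complex.I_im, Complex.neg_re, Complex.neg_im] at h1 h2
  obtain ⟨h1r, h1i⟩ := h1
  obtain ⟨h2r, h2i⟩ := h2
  simp only [Real.exp_zero, Real.cos_neg, Real.sin_neg, one_mul, mul_one, mul_zero, zero_mul,
    sub_zero, zero_sub, add_zero, zero_add, neg_zero, mul_neg, neg_mul] at h1r h1i h2r h2i
  have key1 : r₁ * (r * Real.cos δ + ρ * Real.sin δ) = r ^ 2 := by
    linear_combination r * h1r - ρ * h1i
  have key2 : r₂ * (r * Real.cos δ - ρ * Real.sin δ) = r ^ 2 := by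
    linear_combination r * h2r - ρ * h2i
  have hD1 : r * Real.cos δ + ρ * Real.sin δ ≠ 0 := by
    intro h; rw [h, mul_zero] at key1; exact hr (pow_eq_zero_iff two_ne_zero |>.mp key1.symm)
  have hD2 : r * Real.cos δ - ρ * Real.sin δ ≠ 0 := by
    intro h; rw [h, mul_zero] at key2; exact hr (pow_eq_zero_iff two_ne_zero |>.mp key2.symm)
  have hr₁ : r₁ = r ^ 2 / (r * Real.cos δ + ρ * Real.sin δ) :=
    eq_div_of_mul_eq hD1 key1
  have hr₂ : r₂ = r ^ 2 / (r * Real.cos δ - ρ * Real.sin δ) :=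
    eq_div_of_mul_eq hD2 key2
  refine ⟨hD1, hD2, ?_, hr₁, ?_, hr₂⟩
  · have h : a * r = (-(r * Real.sin δ) / (r * Real.cos δ + ρ * Real.sin δ)) * r := by
      rw [div_mul_eq_mul_div, eq_div_iff hD1]
      linear_combination -((r * Real.cos δ + ρ * Real.sin δ) * h1i) - Real.sin δ * key1
    exact mul_right_cancel₀ hr h
  · have h : b * r = (r * Real.sin δ / (r * Real.cos δ - ρ * Real.sin δ)) * r := by
      rw [div_mul_eq_mul_div, eq_div_iff hD2]
      linear_combination -((r * Real.cos δ - ρ * Real.sin δ) * h2i) + Real.sin δ * key2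
    exact mul_right_cancel₀ hr h
end

section
/- Let p : ℝ → ℝ be twice continuously differentiable and define S(φ₁, φ₂) := 2·p((φ₁+φ₂)/2)·sin((φ₂−φ₁)/2). Then the mixed partial derivative satisfies ∂²S/∂φ₁∂φ₂(φ₁,φ₂) = ½·(p''(φ̄) + p(φ̄))·sin δ, where φ̄ = (φ₁+φ₂)/2 and δ = (φ₂−φ₁)/2. In particular, if p(φ) + p''(φ) > 0 for all φ and 0 < φ₂ − φ₁ < 2π, then ∂²S/∂φ₁∂φ₂(φ₁,φ₂) > 0. -/
/-- twist condition, Theorem 5 of the paper: for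
`S(φ₁,φ₂) = 2p((φ₁+φ₂)/2)·sin((φ₂−φ₁)/2)` the mixed partial derivative equals
`½(p''(φ̄) + p(φ̄))·sin δ`; if `p + p'' > 0` everywhere and `0 < φ₂ − φ₁ < 2π`,
it is positive. -/
theorem stmt7 (p : ℝ → ℝ) (hp : ContDiff ℝ 2 p)
    (S : ℝ → ℝ → ℝ)
    (hS : ∀ φ₁ φ₂ : ℝ, S φ₁ φ₂ = 2 * p ((φ₁ + φ₂) / 2) * Real.sin ((φ₂ - φ₁) / 2))
    (φ₁ φ₂ : ℝ) :
    deriv (fun t => deriv (fun s => S s t) φ₁) φ₂ =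
      (1 / 2) * (deriv (deriv p) ((φ₁ + φ₂) / 2) + p ((φ₁ + φ₂) / 2)) *
        Real.sin ((φ₂ - φ₁) / 2) ∧
    ((∀ φ : ℝ, 0 < p φ + deriv (deriv p) φ) → 0 < φ₂ - φ₁ → φ₂ - φ₁ < 2 * Real.pi →
      0 < deriv (fun t => deriv (fun s => S s t) φ₁) φ₂) := by
  have hp1 : Differentiable ℝ p := hp.differentiable (by simp)
  have hp' : ContDiff ℝ 1 (deriv p) := by
    have h2 : ContDiff ℝ ((1 : ℕ) + 1) p := by exact_mod_cast hp
    exact_mod_cast (contDiff_succ_iff_deriv.mp h2).2.2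
  have hp2 : Differentiable ℝ (deriv p) := hp'.differentiable (by simp)
  have hinner : ∀ t, deriv (fun s => S s t) φ₁ =
      deriv p ((φ₁ + t) / 2) * Real.sin ((t - φ₁) / 2)
        - p ((φ₁ + t) / 2) * Real.cos ((t - φ₁) / 2) := by
    intro t
    have hfun : (fun s => S s t) = fun s => 2 * p ((s + t) / 2) * Real.sin ((t - s) / 2) :=
      funext fun s => hS s t
    rw [hfun]
    have h1 : HasDerivAt (fun s : ℝ => (s + t) / 2) (1 / 2) φ₁ := by
      simpa using ((hasDerivAt_id φ₁).add_const t).div_const 2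
    have h2 : HasDerivAt (fun s : ℝ => (t - s) / 2) (-1 / 2) φ₁ := by
      simpa using ((hasDerivAt_id φ₁).const_sub t).div_const 2
    have hP : HasDerivAt (fun s => p ((s + t) / 2))
        (deriv p ((φ₁ + t) / 2) * (1 / 2)) φ₁ := ((hp1 _).hasDerivAt).comp φ₁ h1
    have hSin : HasDerivAt (fun s => Real.sin ((t - s) / 2))
        (Real.cos ((t - φ₁) / 2) * (-1 / 2)) φ₁ := (Real.hasDerivAt_sin _).comp φ₁ h2
    have hM := (hP.const_mul 2).mul hSin
    exact hM.deriv.trans (by ring)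
  have hfun2 : (fun t => deriv (fun s => S s t) φ₁) =
      fun t => deriv p ((φ₁ + t) / 2) * Real.sin ((t - φ₁) / 2)
        - p ((φ₁ + t) / 2) * Real.cos ((t - φ₁) / 2) := funext hinner
  have h1 : HasDerivAt (fun t : ℝ => (φ₁ + t) / 2) (1 / 2) φ₂ := by
    simpa using ((hasDerivAt_id φ₂).const_add φ₁).div_const 2
  have h2 : HasDerivAt (fun t : ℝ => (t - φ₁) / 2) (1 / 2) φ₂ := by
    simpa using ((hasDerivAt_id φ₂).sub_const φ₁).div_const 2
  have hA : HasDerivAt (fun t => deriv p ((φ₁ + t) / 2))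
      (deriv (deriv p) ((φ₁ + φ₂) / 2) * (1 / 2)) φ₂ := ((hp2 _).hasDerivAt).comp φ₂ h1
  have hB : HasDerivAt (fun t => Real.sin ((t - φ₁) / 2))
      (Real.cos ((φ₂ - φ₁) / 2) * (1 / 2)) φ₂ := (Real.hasDerivAt_sin _).comp φ₂ h2
  have hC : HasDerivAt (fun t => p ((φ₁ + t) / 2))
      (deriv p ((φ₁ + φ₂) / 2) * (1 / 2)) φ₂ := ((hp1 _).hasDerivAt).comp φ₂ h1
  have hD : HasDerivAt (fun t => Real.cos ((t - φ₁) / 2))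
      (-Real.sin ((φ₂ - φ₁) / 2) * (1 / 2)) φ₂ := (Real.hasDerivAt_cos _).comp φ₂ h2
  have hM := (hA.mul hB).sub (hC.mul hD)
  have hkey : deriv (fun t => deriv (fun s => S s t) φ₁) φ₂ =
      (1 / 2) * (deriv (deriv p) ((φ₁ + φ₂) / 2) + p ((φ₁ + φ₂) / 2)) *
        Real.sin ((φ₂ - φ₁) / 2) := by
    rw [hfun2]; exact hM.deriv.trans (by ring)
  refine ⟨hkey, fun hpos hlt hlt2 => ?_⟩
  rw [hkey]
  have hsin : 0 < Real.sin ((φ₂ - φ₁) / 2) :=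
    Real.sin_pos_of_pos_of_lt_pi (by linarith) (by linarith)
  have := hpos ((φ₁ + φ₂) / 2)
  apply mul_pos (mul_pos (by norm_num) (by linarith)) hsin
end

section
/- Let F : ℝ² → ℝ, let (x,y) ∈ ℝ², and let P := F_x(x,y), Q := F_y(x,y) be real numbers (values of the partial derivatives of F at (x,y)). Let m ∈ ℝ and ε ≠ 0. Set R := x² + y², σ := x·Q − y·P, and assume R > 0 and R + 2εσ > 0; set μ := −R·ε/(R + 2εσ), A := (x + εQ, y − εP), B := (x + μQ, y − μP). If F(A)/(‖A‖²)^m = F(B)/(‖B‖²)^m (real powers; note ‖A‖² > 0 and ‖B‖² > 0), then F(A)·(−μ/ε)^{2m} = F(B), where (−μ/ε)^{2m} is the real power of the positive number −μ/ε = R/(R + 2εσ). -/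
/-- Lemma 1 of the paper: if `G = F/(x²+y²)^m` takes equal values
at the Angular-billiard-related points `A = (x+εF_y, y−εF_x)` and
`B = (x+μF_y, y−μF_x)` with `μ = −Rε/(R+2εσ)`, then
`F(A)·(−μ/ε)^{2m} = F(B)` (real powers). -/
theorem stmt11 (F : ℝ × ℝ → ℝ) (x y P Q : ℝ)
    (hP : P = deriv (fun s => F (s, y)) x) (hQ : Q = deriv (fun s => F (x, s)) y)
    (m ε : ℝ) (hε : ε ≠ 0)
    (R σ μ : ℝ) (hR : R = x ^ 2 + y ^ 2) (hσ : σ = x * Q - y * P)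
    (hR0 : 0 < R) (hden : 0 < R + 2 * ε * σ)
    (hμ : μ = -R * ε / (R + 2 * ε * σ))
    (A B : ℝ × ℝ) (hA : A = (x + ε * Q, y - ε * P)) (hB : B = (x + μ * Q, y - μ * P))
    (hinv : F A / (A.1 ^ 2 + A.2 ^ 2) ^ m = F B / (B.1 ^ 2 + B.2 ^ 2) ^ m) :
    F A * (-μ / ε) ^ (2 * m) = F B := by
  have hDne : R + 2 * ε * σ ≠ 0 := ne_of_gt hden
  have ht : -μ / ε = R / (R + 2 * ε * σ) := by
    rw [hμ]; field_simp
  have ht0 : 0 < -μ / ε := by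
    rw [ht]; positivity
  have hA2 : A.1 ^ 2 + A.2 ^ 2 = R + 2 * ε * σ + ε ^ 2 * (P ^ 2 + Q ^ 2) := by
    subst hA hR hσ; simp; ring
  have hA2pos : 0 < A.1 ^ 2 + A.2 ^ 2 := by
    rw [hA2]; positivity
  have hkey : B.1 ^ 2 + B.2 ^ 2 = (-μ / ε) ^ 2 * (A.1 ^ 2 + A.2 ^ 2) := by
    subst hB hμ hA hσ hR
    dsimp only
    have hD2 : x ^ 2 + y ^ 2 + ε * 2 * (x * Q - y * P) ≠ 0 := by rw [mul_comm ε 2]; exact hDne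
    field_simp
    ring
  have hB2pos : 0 < B.1 ^ 2 + B.2 ^ 2 := by
    rw [hkey]; positivity
  have hpow : (B.1 ^ 2 + B.2 ^ 2) ^ m
      = (-μ / ε) ^ (2 * m) * (A.1 ^ 2 + A.2 ^ 2) ^ m := by
    rw [hkey, Real.mul_rpow (by positivity) (le_of_lt hA2pos)]
    congr 1
    rw [Real.rpow_mul (le_of_lt ht0), Real.rpow_two]
  have hApow : (A.1 ^ 2 + A.2 ^ 2) ^ m ≠ 0 := ne_of_gt (Real.rpow_pos_of_pos hA2pos m)
  have hBpow : (B.1 ^ 2 + B.2 ^ 2) ^ m ≠ 0 := ne_of_gt (Real.rpow_pos_of_pos hB2pos m)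
  have h := div_eq_div_iff hApow hBpow |>.mp hinv
  rw [hpow, ← mul_assoc] at h
  exact mul_right_cancel₀ hApow h
end

section
/- Let F be a polynomial in two variables x, y over a commutative ring (e.g. over ℝ). Define H(F) := F_xx·F_y² − 2·F_xy·F_x·F_y + F_yy·F_x², where subscripts denote partial derivatives. Then the following polynomial identity holds: F_y·∂_x(H(F)) − F_x·∂_y(H(F)) = F_xxx·F_y³ − 3·F_xxy·F_x·F_y² + 3·F_xyy·F_x²·F_y − F_yyy·F_x³. -/
open MvPolynomial

lemma pderiv_two' {R : Type*} [CommRing R] {σ : Type*} (i : σ) :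
    pderiv i (2 : MvPolynomial σ R) = 0 := by
  rw [← map_ofNat (C : R →+* MvPolynomial σ R) 2, pderiv_C]

lemma pderiv_comm' {R : Type*} [CommRing R] {σ : Type*} [DecidableEq σ] (i j : σ)
    (p : MvPolynomial σ R) : pderiv i (pderiv j p) = pderiv j (pderiv i p) := by
  induction p using MvPolynomial.induction_on with
  | C a => simp [pderiv_C]
  | add p q hp hq => simp [hp, hq]
  | mul_X p k hp =>
    simp only [pderiv_mul, map_add, pderiv_X, hp]
    rw [Pi.single_apply, Pi.single_apply]
    split <;> split <;> simp [pderiv_one, pderiv_C] <;> ring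

open MvPolynomial

/-- The affine Hessian-type expression `H(u) = u_xx·u_y² − 2·u_xy·u_x·u_y + u_yy·u_x²`
for a polynomial `u` in two variables. -/
noncomputable def Hpoly {R : Type*} [CommRing R] (u : MvPolynomial (Fin 2) R) :
    MvPolynomial (Fin 2) R :=
  pderiv 0 (pderiv 0 u) * (pderiv 1 u) ^ 2 -
    2 * pderiv 1 (pderiv 0 u) * pderiv 0 u * pderiv 1 u +
    pderiv 1 (pderiv 1 u) * (pderiv 0 u) ^ 2

/-- the Lie derivative of `H(F)` along `v = F_y∂_x − F_x∂_y` equals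
`F_xxx F_y³ − 3F_xxy F_x F_y² + 3F_xyy F_x² F_y − F_yyy F_x³` (identity used in the
proof of Theorem 6 of the paper). -/
theorem stmt13 {R : Type*} [CommRing R] (F : MvPolynomial (Fin 2) R) :
    pderiv 1 F * pderiv 0 (Hpoly F) - pderiv 0 F * pderiv 1 (Hpoly F) =
      pderiv 0 (pderiv 0 (pderiv 0 F)) * (pderiv 1 F) ^ 3 -
        3 * pderiv 1 (pderiv 0 (pderiv 0 F)) * pderiv 0 F * (pderiv 1 F) ^ 2 +
        3 * pderiv 1 (pderiv 1 (pderiv 0 F)) * (pderiv 0 F) ^ 2 * pderiv 1 F -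
        pderiv 1 (pderiv 1 (pderiv 1 F)) * (pderiv 0 F) ^ 3 := by
  simp only [Hpoly, map_sub, map_add, pderiv_mul, pderiv_pow, pderiv_two',
    pderiv_comm' (0 : Fin 2) 1]
  ring
end

section
/- Let F : ℝ² → ℝ be three times continuously differentiable on a neighborhood of a point (x,y) ∈ ℝ² with F(x,y) = 0 and R := x² + y² > 0, and let m ∈ ℝ. Write Fx := F_x(x,y), Fy := F_y(x,y), σ := x·Fy − y·Fx, and for small ε set μ(ε) := −R·ε/(R + 2εσ). Suppose there exists δ₀ > 0 such that for all ε with 0 < |ε| < δ₀ one has F(x + ε·Fy, y − ε·Fx)·(R/(R + 2εσ))^{2m} = F(x + μ(ε)·Fy, y − μ(ε)·Fx) (real powers of the positive base R/(R+2εσ)). Then, evaluating all derivatives at (x,y): R·(F_xxx·Fy³ − 3·F_xxy·Fy²·Fx + 3·F_xyy·Fy·Fx² − F_yyy·Fx³) + 6·(1−m)·(F_xx·Fy² − 2·F_xy·Fx·Fy + F_yy·Fx²)·σ = 0. -/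
/-- Partial derivative of `F : ℝ × ℝ → ℝ` in the first variable. -/
noncomputable def pdx (F : ℝ × ℝ → ℝ) : ℝ × ℝ → ℝ :=
  fun p => deriv (fun s => F (s, p.2)) p.1

/-- Partial derivative of `F : ℝ × ℝ → ℝ` in the second variable. -/
noncomputable def pdy (F : ℝ × ℝ → ℝ) : ℝ × ℝ → ℝ :=
  fun p => deriv (fun s => F (p.1, s)) p.2

open Filter Topology

lemma pdx_eq {f : ℝ × ℝ → ℝ} {q : ℝ × ℝ} (hf : DifferentiableAt ℝ f q) :
    pdx f q = fderiv ℝ f q (1, 0) := by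
  have hι : HasDerivAt (fun s : ℝ => (s, q.2)) ((1:ℝ), (0:ℝ)) q.1 :=
    (hasDerivAt_id q.1).prodMk (hasDerivAt_const q.1 q.2)
  have hf' : HasFDerivAt f (fderiv ℝ f q) (q.1, q.2) := by
    rw [Prod.mk.eta]; exact hf.hasFDerivAt
  exact (hf'.comp_hasDerivAt q.1 hι).deriv

lemma pdy_eq {f : ℝ × ℝ → ℝ} {q : ℝ × ℝ} (hf : DifferentiableAt ℝ f q) :
    pdy f q = fderiv ℝ f q (0, 1) := by
  have hι : HasDerivAt (fun s : ℝ => (q.1, s)) ((0:ℝ), (1:ℝ)) q.2 :=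
    (hasDerivAt_const q.2 q.1).prodMk (hasDerivAt_id q.2)
  have hf' : HasFDerivAt f (fderiv ℝ f q) (q.1, q.2) := by
    rw [Prod.mk.eta]; exact hf.hasFDerivAt
  exact (hf'.comp_hasDerivAt q.2 hι).deriv

lemma pdx_congr {f g : ℝ × ℝ → ℝ} {q : ℝ × ℝ} (h : f =ᶠ[𝓝 q] g) : pdx f q = pdx g q := by
  apply Filter.EventuallyEq.deriv_eq
  have ht : Tendsto (fun s : ℝ => (s, q.2)) (𝓝 q.1) (𝓝 q) := by
    conv_rhs => rw [← Prod.mk.eta (p := q)]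
    exact (continuous_id.prodMk continuous_const).tendsto q.1
  exact ht.eventually h

lemma pdy_congr {f g : ℝ × ℝ → ℝ} {q : ℝ × ℝ} (h : f =ᶠ[𝓝 q] g) : pdy f q = pdy g q := by
  apply Filter.EventuallyEq.deriv_eq
  have ht : Tendsto (fun s : ℝ => (q.1, s)) (𝓝 q.2) (𝓝 q) := by
    conv_rhs => rw [← Prod.mk.eta (p := q)]
    exact (continuous_const.prodMk continuous_id).tendsto q.2
  exact ht.eventually h

lemma hasDerivAt_comp_line {G : ℝ × ℝ → ℝ} {v a : ℝ × ℝ} {ε : ℝ}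
    (h : DifferentiableAt ℝ G (a + ε • v)) :
    HasDerivAt (fun t => G (a + t • v)) (fderiv ℝ G (a + ε • v) v) ε := by
  have hp : HasDerivAt (fun t : ℝ => a + t • v) v ε := by
    simpa using ((hasDerivAt_id ε).smul_const v).const_add a
  exact h.hasFDerivAt.comp_hasDerivAt ε hp

lemma fderiv_apply_comm {E F G : Type*} [NormedAddCommGroup E] [NormedSpace ℝ E]
    [NormedAddCommGroup F] [NormedSpace ℝ F] [NormedAddCommGroup G] [NormedSpace ℝ G]
    {c : E → F →L[ℝ] G} {x : E} (hc : DifferentiableAt ℝ c x) (u : F) (w : E) :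
    fderiv ℝ (fun y => c y u) x w = fderiv ℝ c x w u := by
  rw [fderiv_clm_apply hc (differentiableAt_const u)]
  simp

lemma pdx_apply_eq {f2 : ℝ × ℝ → ℝ × ℝ →L[ℝ] ℝ} {q : ℝ × ℝ}
    (hd : DifferentiableAt ℝ f2 q) (u : ℝ × ℝ) :
    pdx (fun r => f2 r u) q = fderiv ℝ f2 q (1, 0) u := by
  rw [pdx_eq (hd.clm_apply (differentiableAt_const u)), fderiv_apply_comm hd]

lemma pdy_apply_eq {f2 : ℝ × ℝ → ℝ × ℝ →L[ℝ] ℝ} {q : ℝ × ℝ}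
    (hd : DifferentiableAt ℝ f2 q) (u : ℝ × ℝ) :
    pdy (fun r => f2 r u) q = fderiv ℝ f2 q (0, 1) u := by
  rw [pdy_eq (hd.clm_apply (differentiableAt_const u)), fderiv_apply_comm hd]

lemma pdx_apply2_eq {f2 : ℝ × ℝ → ℝ × ℝ →L[ℝ] ℝ × ℝ →L[ℝ] ℝ} {q : ℝ × ℝ}
    (hd : DifferentiableAt ℝ f2 q) (u z : ℝ × ℝ) :
    pdx (fun r => f2 r u z) q = fderiv ℝ f2 q (1, 0) u z := by
  rw [pdx_eq ((hd.clm_apply (differentiableAt_const u)).clm_apply (differentiableAt_const z)),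
    fderiv_apply_comm (hd.clm_apply (differentiableAt_const u)) z,
    fderiv_apply_comm hd u]

lemma pdy_apply2_eq {f2 : ℝ × ℝ → ℝ × ℝ →L[ℝ] ℝ × ℝ →L[ℝ] ℝ} {q : ℝ × ℝ}
    (hd : DifferentiableAt ℝ f2 q) (u z : ℝ × ℝ) :
    pdy (fun r => f2 r u z) q = fderiv ℝ f2 q (0, 1) u z := by
  rw [pdy_eq ((hd.clm_apply (differentiableAt_const u)).clm_apply (differentiableAt_const z)),
    fderiv_apply_comm (hd.clm_apply (differentiableAt_const u)) z,
    fderiv_apply_comm hd u]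

lemma pdx_pdx_eq {f : ℝ × ℝ → ℝ} {q : ℝ × ℝ} (hf : ∀ᶠ r in 𝓝 q, DifferentiableAt ℝ f r)
    (hd : DifferentiableAt ℝ (fderiv ℝ f) q) :
    pdx (pdx f) q = fderiv ℝ (fderiv ℝ f) q (1, 0) (1, 0) := by
  have h1 : pdx f =ᶠ[𝓝 q] fun r => fderiv ℝ f r (1, 0) := by
    filter_upwards [hf] with r hr using pdx_eq hr
  rw [pdx_congr h1, pdx_apply_eq hd]

lemma pdx_pdy_eq {f : ℝ × ℝ → ℝ} {q : ℝ × ℝ} (hf : ∀ᶠ r in 𝓝 q, DifferentiableAt ℝ f r)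
    (hd : DifferentiableAt ℝ (fderiv ℝ f) q) :
    pdx (pdy f) q = fderiv ℝ (fderiv ℝ f) q (1, 0) (0, 1) := by
  have h1 : pdy f =ᶠ[𝓝 q] fun r => fderiv ℝ f r (0, 1) := by
    filter_upwards [hf] with r hr using pdy_eq hr
  rw [pdx_congr h1, pdx_apply_eq hd]

lemma pdy_pdx_eq {f : ℝ × ℝ → ℝ} {q : ℝ × ℝ} (hf : ∀ᶠ r in 𝓝 q, DifferentiableAt ℝ f r)
    (hd : DifferentiableAt ℝ (fderiv ℝ f) q) :
    pdy (pdx f) q = fderiv ℝ (fderiv ℝ f) q (0, 1) (1, 0) := by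
  have h1 : pdx f =ᶠ[𝓝 q] fun r => fderiv ℝ f r (1, 0) := by
    filter_upwards [hf] with r hr using pdx_eq hr
  rw [pdy_congr h1, pdy_apply_eq hd]

lemma pdy_pdy_eq {f : ℝ × ℝ → ℝ} {q : ℝ × ℝ} (hf : ∀ᶠ r in 𝓝 q, DifferentiableAt ℝ f r)
    (hd : DifferentiableAt ℝ (fderiv ℝ f) q) :
    pdy (pdy f) q = fderiv ℝ (fderiv ℝ f) q (0, 1) (0, 1) := by
  have h1 : pdy f =ᶠ[𝓝 q] fun r => fderiv ℝ f r (0, 1) := by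
    filter_upwards [hf] with r hr using pdy_eq hr
  rw [pdy_congr h1, pdy_apply_eq hd]

set_option maxHeartbeats 2000000 in
/-- equation (14) of the paper: extracting the `ε³`-coefficient
from the invariance identity of Lemma 1 at a point `(x,y)` of `{F = 0}` with
`x² + y² > 0` yields
`R·(F_xxx F_y³ − 3F_xxy F_y² F_x + 3F_xyy F_y F_x² − F_yyy F_x³)
  + 6(1−m)·H(F)·σ = 0`. -/
theorem stmt14 (U : Set (ℝ × ℝ)) (hU : IsOpen U) (x y : ℝ) (hxy : (x, y) ∈ U)
    (F : ℝ × ℝ → ℝ) (hF : ContDiffOn ℝ 3 F U)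
    (hF0 : F (x, y) = 0) (m : ℝ)
    (R : ℝ) (hR : R = x ^ 2 + y ^ 2) (hR0 : 0 < R)
    (Fx Fy σ : ℝ) (hFx : Fx = pdx F (x, y)) (hFy : Fy = pdy F (x, y))
    (hσ : σ = x * Fy - y * Fx)
    (hinv : ∃ δ₀ > 0, ∀ ε : ℝ, 0 < |ε| → |ε| < δ₀ →
      F (x + ε * Fy, y - ε * Fx) * (R / (R + 2 * ε * σ)) ^ (2 * m) =
        F (x + (-R * ε / (R + 2 * ε * σ)) * Fy, y - (-R * ε / (R + 2 * ε * σ)) * Fx)) :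
    R * (pdx (pdx (pdx F)) (x, y) * Fy ^ 3 -
          3 * pdy (pdx (pdx F)) (x, y) * Fy ^ 2 * Fx +
          3 * pdy (pdy (pdx F)) (x, y) * Fy * Fx ^ 2 -
          pdy (pdy (pdy F)) (x, y) * Fx ^ 3) +
      6 * (1 - m) *
        (pdx (pdx F) (x, y) * Fy ^ 2 - 2 * pdy (pdx F) (x, y) * Fx * Fy +
          pdy (pdy F) (x, y) * Fx ^ 2) * σ = 0 := by
  have hRne : R ≠ 0 := ne_of_gt hR0
  set a : ℝ × ℝ := (x, y) with ha_def
  set v : ℝ × ℝ := (Fy, -Fx) with hv_def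
  -- basic regularity
  have hF2 : ContDiffOn ℝ 2 (fderiv ℝ F) U := hF.fderiv_of_isOpen hU (by norm_num)
  have hF3 : ContDiffOn ℝ 1 (fderiv ℝ (fderiv ℝ F)) U := hF2.fderiv_of_isOpen hU (by norm_num)
  have hdF : ∀ q ∈ U, DifferentiableAt ℝ F q := fun q hq =>
    (hF.differentiableOn (by norm_num)).differentiableAt (hU.mem_nhds hq)
  have hdF1 : ∀ q ∈ U, DifferentiableAt ℝ (fderiv ℝ F) q := fun q hq =>
    (hF2.differentiableOn (by norm_num)).differentiableAt (hU.mem_nhds hq)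
  have hdF2 : ∀ q ∈ U, DifferentiableAt ℝ (fderiv ℝ (fderiv ℝ F)) q := fun q hq =>
    (hF3.differentiableOn (by norm_num)).differentiableAt (hU.mem_nhds hq)
  have hevdF : ∀ q ∈ U, ∀ᶠ r in 𝓝 q, DifferentiableAt ℝ F r := fun q hq =>
    (hU.eventually_mem hq).mono (fun r hr => hdF r hr)
  -- second partials
  have hP11 : ∀ q ∈ U, pdx (pdx F) q = fderiv ℝ (fderiv ℝ F) q (1, 0) (1, 0) :=
    fun q hq => pdx_pdx_eq (hevdF q hq) (hdF1 q hq)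
  have hP12 : ∀ q ∈ U, pdx (pdy F) q = fderiv ℝ (fderiv ℝ F) q (1, 0) (0, 1) :=
    fun q hq => pdx_pdy_eq (hevdF q hq) (hdF1 q hq)
  have hP21 : ∀ q ∈ U, pdy (pdx F) q = fderiv ℝ (fderiv ℝ F) q (0, 1) (1, 0) :=
    fun q hq => pdy_pdx_eq (hevdF q hq) (hdF1 q hq)
  have hP22 : ∀ q ∈ U, pdy (pdy F) q = fderiv ℝ (fderiv ℝ F) q (0, 1) (0, 1) :=
    fun q hq => pdy_pdy_eq (hevdF q hq) (hdF1 q hq)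
  -- symmetry of the second derivative on U
  have hsym2 : ∀ q ∈ U, ∀ u z : ℝ × ℝ,
      fderiv ℝ (fderiv ℝ F) q u z = fderiv ℝ (fderiv ℝ F) q z u := by
    intro q hq u z
    exact second_derivative_symmetric_of_eventually
      ((hU.eventually_mem hq).mono (fun r hr => (hdF r hr).hasFDerivAt))
      ((hdF1 q hq).hasFDerivAt) u z
  -- third partials at a
  have haU : a ∈ U := hxy
  have hT111 : pdx (pdx (pdx F)) a = fderiv ℝ (fderiv ℝ (fderiv ℝ F)) a (1,0) (1,0) (1,0) := by
    have hin : pdx (pdx F) =ᶠ[𝓝 a] fun r => fderiv ℝ (fderiv ℝ F) r (1,0) (1,0) :=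
      (hU.eventually_mem haU).mono (fun r hr => hP11 r hr)
    rw [pdx_congr hin, pdx_apply2_eq (hdF2 a haU)]
  have hT211 : pdy (pdx (pdx F)) a = fderiv ℝ (fderiv ℝ (fderiv ℝ F)) a (0,1) (1,0) (1,0) := by
    have hin : pdx (pdx F) =ᶠ[𝓝 a] fun r => fderiv ℝ (fderiv ℝ F) r (1,0) (1,0) :=
      (hU.eventually_mem haU).mono (fun r hr => hP11 r hr)
    rw [pdy_congr hin, pdy_apply2_eq (hdF2 a haU)]
  have hT221 : pdy (pdy (pdx F)) a = fderiv ℝ (fderiv ℝ (fderiv ℝ F)) a (0,1) (0,1) (1,0) := by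
    have hin : pdy (pdx F) =ᶠ[𝓝 a] fun r => fderiv ℝ (fderiv ℝ F) r (0,1) (1,0) :=
      (hU.eventually_mem haU).mono (fun r hr => hP21 r hr)
    rw [pdy_congr hin, pdy_apply2_eq (hdF2 a haU)]
  have hT222 : pdy (pdy (pdy F)) a = fderiv ℝ (fderiv ℝ (fderiv ℝ F)) a (0,1) (0,1) (0,1) := by
    have hin : pdy (pdy F) =ᶠ[𝓝 a] fun r => fderiv ℝ (fderiv ℝ F) r (0,1) (0,1) :=
      (hU.eventually_mem haU).mono (fun r hr => hP22 r hr)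
    rw [pdy_congr hin, pdy_apply2_eq (hdF2 a haU)]
  -- symmetry of the third derivative at a
  have hsym3a : ∀ u z t : ℝ × ℝ, fderiv ℝ (fderiv ℝ (fderiv ℝ F)) a u z t =
      fderiv ℝ (fderiv ℝ (fderiv ℝ F)) a z u t := by
    intro u z t
    have h := second_derivative_symmetric_of_eventually
      (f := fderiv ℝ F) (f' := fderiv ℝ (fderiv ℝ F))
      ((hU.eventually_mem haU).mono (fun r hr => (hdF1 r hr).hasFDerivAt))
      ((hdF2 a haU).hasFDerivAt) u z
    exact DFunLike.congr_fun h t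
  have hsym3b : ∀ u z t : ℝ × ℝ, fderiv ℝ (fderiv ℝ (fderiv ℝ F)) a u z t =
      fderiv ℝ (fderiv ℝ (fderiv ℝ F)) a u t z := by
    intro u z t
    have hdz : DifferentiableAt ℝ (fun r => fderiv ℝ (fderiv ℝ F) r z) a :=
      (hdF2 a haU).clm_apply (differentiableAt_const z)
    have hdt : DifferentiableAt ℝ (fun r => fderiv ℝ (fderiv ℝ F) r t) a :=
      (hdF2 a haU).clm_apply (differentiableAt_const t)
    have hfe : (fun r => fderiv ℝ (fderiv ℝ F) r z t) =ᶠ[𝓝 a]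
        (fun r => fderiv ℝ (fderiv ℝ F) r t z) :=
      (hU.eventually_mem haU).mono (fun r hr => hsym2 r hr z t)
    have e1 : fderiv ℝ (fun r => fderiv ℝ (fderiv ℝ F) r z t) a u =
        fderiv ℝ (fderiv ℝ (fderiv ℝ F)) a u z t := by
      rw [fderiv_apply_comm hdz t u, fderiv_apply_comm (hdF2 a haU) z u]
    have e2 : fderiv ℝ (fun r => fderiv ℝ (fderiv ℝ F) r t z) a u =
        fderiv ℝ (fderiv ℝ (fderiv ℝ F)) a u t z := by
      rw [fderiv_apply_comm hdt z u, fderiv_apply_comm (hdF2 a haU) t u]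
    rw [← e1, ← e2, hfe.fderiv_eq]
  -- the one-dimensional section g and its derivatives
  set g : ℝ → ℝ := fun t => F (a + t • v) with hg_def
  set g1 : ℝ → ℝ := fun t => fderiv ℝ F (a + t • v) v with hg1_def
  set g2 : ℝ → ℝ := fun t => fderiv ℝ (fderiv ℝ F) (a + t • v) v v with hg2_def
  set g3 : ℝ → ℝ := fun t => fderiv ℝ (fderiv ℝ (fderiv ℝ F)) (a + t • v) v v v with hg3_def
  have hp0 : a + (0:ℝ) • v = a := by rw [zero_smul, add_zero]
  have hpcont : Continuous (fun t : ℝ => a + t • v) := by fun_prop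
  have hmemU : ∀ᶠ r in 𝓝 (a + (0:ℝ) • v), r ∈ U := by rw [hp0]; exact hU.eventually_mem haU
  have hpU : ∀ᶠ t in 𝓝 (0:ℝ), a + t • v ∈ U := (hpcont.tendsto 0).eventually hmemU
  have hgd : ∀ᶠ t in 𝓝 (0:ℝ),
      HasDerivAt g (g1 t) t ∧ HasDerivAt g1 (g2 t) t ∧ HasDerivAt g2 (g3 t) t := by
    filter_upwards [hpU] with t ht
    refine ⟨hasDerivAt_comp_line (hdF _ ht), ?_, ?_⟩
    · have h2 := hasDerivAt_comp_line (G := fun q => fderiv ℝ F q v)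
        ((hdF1 _ ht).clm_apply (differentiableAt_const v))
      rwa [fderiv_apply_comm (hdF1 _ ht) v v] at h2
    · have h3 := hasDerivAt_comp_line (G := fun q => fderiv ℝ (fderiv ℝ F) q v v)
        (((hdF2 _ ht).clm_apply (differentiableAt_const v)).clm_apply (differentiableAt_const v))
      rwa [fderiv_apply_comm ((hdF2 _ ht).clm_apply (differentiableAt_const v)) v v,
        fderiv_apply_comm (hdF2 _ ht) v v] at h3
  -- values at 0
  have hg0 : g 0 = 0 := by
    have h : g 0 = F (a + (0:ℝ) • v) := rfl
    rw [h, hp0]; exact hF0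
  have hvdec : v = Fy • ((1:ℝ), (0:ℝ)) + (-Fx) • ((0:ℝ), (1:ℝ)) := by
    rw [hv_def]; simp [Prod.ext_iff]
  have hFx1 : Fx = fderiv ℝ F a (1, 0) := by rw [hFx]; exact pdx_eq (hdF a haU)
  have hFy1 : Fy = fderiv ℝ F a (0, 1) := by rw [hFy]; exact pdy_eq (hdF a haU)
  have hg1_0 : g1 0 = 0 := by
    have h : g1 0 = fderiv ℝ F a v := by
      have : g1 0 = fderiv ℝ F (a + (0:ℝ) • v) v := rfl
      rw [this, hp0]
    rw [h, hvdec, map_add, map_smul, map_smul, smul_eq_mul, smul_eq_mul, ← hFx1, ← hFy1]; ring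
  have hg2_0 : g2 0 = fderiv ℝ (fderiv ℝ F) a v v := by
    have : g2 0 = fderiv ℝ (fderiv ℝ F) (a + (0:ℝ) • v) v v := rfl
    rw [this, hp0]
  have hg3_0 : g3 0 = fderiv ℝ (fderiv ℝ (fderiv ℝ F)) a v v v := by
    have : g3 0 = fderiv ℝ (fderiv ℝ (fderiv ℝ F)) (a + (0:ℝ) • v) v v v := rfl
    rw [this, hp0]
  have hbH : g2 0 = pdx (pdx F) a * Fy ^ 2 - 2 * pdy (pdx F) a * Fx * Fy +
      pdy (pdy F) a * Fx ^ 2 := by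
    rw [hg2_0, hvdec]
    simp only [map_add, map_smul, ContinuousLinearMap.add_apply, ContinuousLinearMap.coe_smul',
      Pi.smul_apply, smul_eq_mul]
    rw [hsym2 a haU (1, 0) (0, 1), ← hP11 a haU, ← hP21 a haU, ← hP22 a haU]
    ring
  have h112 : fderiv ℝ (fderiv ℝ (fderiv ℝ F)) a (1,0) (1,0) (0,1) =
      fderiv ℝ (fderiv ℝ (fderiv ℝ F)) a (0,1) (1,0) (1,0) :=
    (hsym3b (1,0) (1,0) (0,1)).trans (hsym3a (1,0) (0,1) (1,0))
  have h121 : fderiv ℝ (fderiv ℝ (fderiv ℝ F)) a (1,0) (0,1) (1,0) =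
      fderiv ℝ (fderiv ℝ (fderiv ℝ F)) a (0,1) (1,0) (1,0) :=
    hsym3a (1,0) (0,1) (1,0)
  have h122 : fderiv ℝ (fderiv ℝ (fderiv ℝ F)) a (1,0) (0,1) (0,1) =
      fderiv ℝ (fderiv ℝ (fderiv ℝ F)) a (0,1) (0,1) (1,0) :=
    (hsym3a (1,0) (0,1) (0,1)).trans (hsym3b (0,1) (1,0) (0,1))
  have h212 : fderiv ℝ (fderiv ℝ (fderiv ℝ F)) a (0,1) (1,0) (0,1) =
      fderiv ℝ (fderiv ℝ (fderiv ℝ F)) a (0,1) (0,1) (1,0) :=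
    hsym3b (0,1) (1,0) (0,1)
  have hcC : g3 0 = pdx (pdx (pdx F)) a * Fy ^ 3 - 3 * pdy (pdx (pdx F)) a * Fy ^ 2 * Fx +
      3 * pdy (pdy (pdx F)) a * Fy * Fx ^ 2 - pdy (pdy (pdy F)) a * Fx ^ 3 := by
    rw [hg3_0, hvdec]
    simp only [map_add, map_smul, ContinuousLinearMap.add_apply, ContinuousLinearMap.coe_smul',
      Pi.smul_apply, smul_eq_mul]
    rw [h112, h121, h122, h212, ← hT111, ← hT211, ← hT221, ← hT222]
    ring
  -- the weight w and the Möbius-type reparametrization μ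
  set den : ℝ → ℝ := fun t => R + 2 * t * σ with hden_def
  set w : ℝ → ℝ := fun t => (R / den t) ^ (2 * m) with hw_def
  set w1 : ℝ → ℝ := deriv w with hw1_def
  set w2 : ℝ → ℝ := deriv w1 with hw2_def
  set μ : ℝ → ℝ := fun t => -R * t / den t with hμ_def
  set m1 : ℝ → ℝ := fun t => -(R ^ 2) / den t ^ 2 with hm1_def
  set ν : ℝ → ℝ := fun t => 4 * σ * R ^ 2 / den t ^ 3 with hν_def
  have hden0 : den 0 = R := by show R + 2 * 0 * σ = R; ring
  have hden0ne : den 0 ≠ 0 := by rw [hden0]; exact hRne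
  have hdenC : Continuous den := by rw [hden_def]; fun_prop
  have hdenne : ∀ᶠ t in 𝓝 (0:ℝ), den t ≠ 0 := hdenC.continuousAt.eventually_ne hden0ne
  have hden' : ∀ t : ℝ, HasDerivAt den (2 * σ) t := by
    intro t
    have h2 := (((hasDerivAt_id t).const_mul (2:ℝ)).mul_const σ).const_add R
    have : HasDerivAt (fun y : ℝ => R + 2 * y * σ) (2 * σ) t := by
      exact h2.congr_deriv (by ring)
    exact this
  have hμ0 : μ 0 = 0 := by show -R * 0 / den 0 = 0; simp
  have hμtend : Tendsto μ (𝓝 0) (𝓝 0) := by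
    have hc : ContinuousAt μ 0 := by
      rw [hμ_def]
      exact ((continuousAt_const.mul continuousAt_id).div hdenC.continuousAt hden0ne)
    have := hc.tendsto
    rwa [hμ0] at this
  have hμd : ∀ t : ℝ, den t ≠ 0 → HasDerivAt μ (m1 t) t := by
    intro t ht
    have h1 : HasDerivAt (fun y : ℝ => -R * y) (-R) t := by
      simpa using (hasDerivAt_id t).const_mul (-R)
    have h := h1.div (hden' t) ht
    have harg : (-R * den t - -R * t * (2 * σ)) / den t ^ 2 = m1 t := by
      show _ = -(R ^ 2) / den t ^ 2
      rw [div_eq_div_iff (pow_ne_zero 2 ht) (pow_ne_zero 2 ht)]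
      have hdt : den t = R + 2 * t * σ := rfl
      rw [hdt]; ring
    exact harg ▸ h
  have hm1d : ∀ t : ℝ, den t ≠ 0 → HasDerivAt m1 (ν t) t := by
    intro t ht
    have h := (hasDerivAt_const t (-(R ^ 2))).div ((hden' t).pow 2) (pow_ne_zero 2 ht)
    have hdt : den t = R + 2 * t * σ := rfl
    refine (h.congr_deriv ?_ : HasDerivAt m1 (ν t) t)
    symm
    show 4 * σ * R ^ 2 / den t ^ 3 = _
    simp only [Pi.pow_apply]
    rw [div_eq_div_iff (pow_ne_zero 3 ht) (by positivity)]
    push_cast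
    rw [hdt]; ring
  obtain ⟨Vν, hνd⟩ : ∃ V : ℝ, HasDerivAt ν V 0 :=
    ⟨_, (hasDerivAt_const 0 (4 * σ * R ^ 2)).div ((hden' 0).pow 3) (pow_ne_zero 3 hden0ne)⟩
  have hm1_0 : m1 0 = -1 := by
    show -(R ^ 2) / den 0 ^ 2 = -1
    rw [hden0]; field_simp
  have hν0 : ν 0 = 4 * σ / R := by
    show 4 * σ * R ^ 2 / den 0 ^ 3 = 4 * σ / R
    rw [hden0, div_eq_div_iff (by positivity) hRne]; ring
  -- regularity of w near 0
  have hdenCD : ContDiffAt ℝ 3 den 0 := by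
    rw [hden_def]
    exact contDiffAt_const.add ((contDiffAt_const.mul contDiffAt_id).mul contDiffAt_const)
  have hbase0 : R / den 0 ≠ 0 := by rw [hden0, div_self hRne]; exact one_ne_zero
  have hwCD : ContDiffAt ℝ 3 w 0 := by
    have hb : ContDiffAt ℝ 3 (fun t => R / den t) 0 := contDiffAt_const.div hdenCD hden0ne
    exact hb.rpow_const_of_ne hbase0
  obtain ⟨s0, hs0, hws0⟩ := hwCD.contDiffOn (le_refl 3) (by norm_num)
  have h0s : (0:ℝ) ∈ interior s0 := mem_interior_iff_mem_nhds.mpr hs0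
  have hws : ContDiffOn ℝ 3 w (interior s0) := hws0.mono interior_subset
  have hw1s : ContDiffOn ℝ 2 w1 (interior s0) :=
    hws.deriv_of_isOpen isOpen_interior (by norm_num)
  have hw2s : ContDiffOn ℝ 1 w2 (interior s0) :=
    hw1s.deriv_of_isOpen isOpen_interior (by norm_num)
  have hsmem : ∀ᶠ t in 𝓝 (0:ℝ), t ∈ interior s0 := isOpen_interior.eventually_mem h0s
  have hwd : ∀ t ∈ interior s0, HasDerivAt w (w1 t) t := fun t ht =>
    ((hws.differentiableOn (by norm_num)).differentiableAt (isOpen_interior.mem_nhds ht)).hasDerivAt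
  have hw1d : ∀ t ∈ interior s0, HasDerivAt w1 (w2 t) t := fun t ht =>
    ((hw1s.differentiableOn (by norm_num)).differentiableAt
      (isOpen_interior.mem_nhds ht)).hasDerivAt
  have hw2d0 : DifferentiableAt ℝ w2 0 :=
    (hw2s.differentiableOn (by norm_num)).differentiableAt (isOpen_interior.mem_nhds h0s)
  have hw0 : w 0 = 1 := by
    show (R / den 0) ^ (2 * m) = 1
    rw [hden0, div_self hRne, Real.one_rpow]
  have hw1_0 : w1 0 = -(4 * m * σ) / R := by
    have hb : HasDerivAt (fun t => R / den t) (-(2 * σ * R) / R ^ 2) 0 := by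
      have h := (hasDerivAt_const (0:ℝ) R).fun_div (hden' 0) hden0ne
      refine h.congr_deriv ?_
      rw [hden0]; ring
    have h2 := hb.rpow_const (p := 2 * m) (Or.inl hbase0)
    have h3 : w1 0 = -(2 * σ * R) / R ^ 2 * (2 * m) * (R / den 0) ^ (2 * m - 1) := h2.deriv
    rw [h3, hden0, div_self hRne, Real.one_rpow]
    field_simp; ring
  -- translate the invariance identity
  obtain ⟨δ₀, hδ₀, hid⟩ := hinv
  have harg : ∀ u : ℝ, a + u • v = (x + u * Fy, y - u * Fx) := by
    intro u
    show ((x, y) : ℝ × ℝ) + u • ((Fy, -Fx) : ℝ × ℝ) = _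
    simp only [Prod.smul_mk, smul_eq_mul, Prod.mk_add_mk, Prod.mk.injEq]
    exact ⟨trivial, by ring⟩
  have hAB : (fun t => g t * w t) =ᶠ[𝓝 (0:ℝ)] fun t => g (μ t) := by
    have hball : ∀ᶠ t in 𝓝 (0:ℝ), |t| < δ₀ := by
      filter_upwards [Metric.ball_mem_nhds (0:ℝ) hδ₀] with t ht
      simpa [Real.dist_eq] using ht
    filter_upwards [hball] with t ht
    rcases eq_or_ne t 0 with rfl | htne
    · rw [hg0, hμ0, hg0, zero_mul]
    · have e1 : g t = F (x + t * Fy, y - t * Fx) := by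
        show F (a + t • v) = _; rw [harg t]
      have e2 : w t = (R / (R + 2 * t * σ)) ^ (2 * m) := rfl
      have e3 : g (μ t) = F (x + (-R * t / (R + 2 * t * σ)) * Fy,
          y - (-R * t / (R + 2 * t * σ)) * Fx) := by
        show F (a + μ t • v) = _; rw [harg (μ t)]
      rw [e1, e2, e3]
      exact hid t (abs_pos.mpr htne) ht
  -- third derivative of the left-hand side
  have hA1 : deriv (fun t => g t * w t) =ᶠ[𝓝 (0:ℝ)] fun t => g1 t * w t + g t * w1 t := by
    filter_upwards [hgd, hsmem] with t ht hts
    exact (ht.1.mul (hwd t hts)).deriv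
  have hA2 : deriv (fun t => g1 t * w t + g t * w1 t) =ᶠ[𝓝 (0:ℝ)]
      fun t => g2 t * w t + g1 t * w1 t + (g1 t * w1 t + g t * w2 t) := by
    filter_upwards [hgd, hsmem] with t ht hts
    exact ((ht.2.1.mul (hwd t hts)).add (ht.1.mul (hw1d t hts))).deriv
  have hgd0 := hgd.self_of_nhds
  have hA3 : deriv (fun t => g2 t * w t + g1 t * w1 t + (g1 t * w1 t + g t * w2 t)) 0 =
      g3 0 * w 0 + g2 0 * w1 0 + (g2 0 * w1 0 + g1 0 * w2 0) +
        (g2 0 * w1 0 + g1 0 * w2 0 + (g1 0 * w2 0 + g 0 * deriv w2 0)) :=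
    ((((hgd0.2.2.mul (hwd 0 h0s)).add (hgd0.2.1.mul (hw1d 0 h0s))).add
      ((hgd0.2.1.mul (hw1d 0 h0s)).add (hgd0.1.mul hw2d0.hasDerivAt))).deriv)
  have dA : deriv (deriv (deriv (fun t => g t * w t))) 0 =
      g3 0 * w 0 + g2 0 * w1 0 + (g2 0 * w1 0 + g1 0 * w2 0) +
        (g2 0 * w1 0 + g1 0 * w2 0 + (g1 0 * w2 0 + g 0 * deriv w2 0)) := by
    have e1 : deriv (deriv (fun t => g t * w t)) =ᶠ[𝓝 (0:ℝ)]
        deriv (fun t => g1 t * w t + g t * w1 t) := hA1.deriv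
    have e2 := (e1.trans hA2).deriv
    rw [e2.eq_of_nhds, hA3]
  -- third derivative of the right-hand side
  have hgdμ : ∀ᶠ t in 𝓝 (0:ℝ),
      HasDerivAt g (g1 (μ t)) (μ t) ∧ HasDerivAt g1 (g2 (μ t)) (μ t) ∧
        HasDerivAt g2 (g3 (μ t)) (μ t) := hμtend.eventually hgd
  have hB1 : deriv (fun t => g (μ t)) =ᶠ[𝓝 (0:ℝ)] fun t => g1 (μ t) * m1 t := by
    filter_upwards [hgdμ, hdenne] with t ht hd
    exact (ht.1.comp t (hμd t hd)).deriv
  have hB2 : deriv (fun t => g1 (μ t) * m1 t) =ᶠ[𝓝 (0:ℝ)]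
      fun t => g2 (μ t) * m1 t * m1 t + g1 (μ t) * ν t := by
    filter_upwards [hgdμ, hdenne] with t ht hd
    exact ((ht.2.1.comp t (hμd t hd)).mul (hm1d t hd)).deriv
  have hgdμ0 := hgdμ.self_of_nhds
  have hB3 : deriv (fun t => g2 (μ t) * m1 t * m1 t + g1 (μ t) * ν t) 0 =
      (g3 (μ 0) * m1 0 * m1 0 + g2 (μ 0) * ν 0) * m1 0 + g2 (μ 0) * m1 0 * ν 0 +
        (g2 (μ 0) * m1 0 * ν 0 + g1 (μ 0) * Vν) :=
    ((((hgdμ0.2.2.comp 0 (hμd 0 hden0ne)).mul (hm1d 0 hden0ne)).mul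
      (hm1d 0 hden0ne)).add ((hgdμ0.2.1.comp 0 (hμd 0 hden0ne)).mul hνd)).deriv
  have dB : deriv (deriv (deriv (fun t => g (μ t)))) 0 =
      (g3 (μ 0) * m1 0 * m1 0 + g2 (μ 0) * ν 0) * m1 0 + g2 (μ 0) * m1 0 * ν 0 +
        (g2 (μ 0) * m1 0 * ν 0 + g1 (μ 0) * Vν) := by
    have e1 : deriv (deriv (fun t => g (μ t))) =ᶠ[𝓝 (0:ℝ)]
        deriv (fun t => g1 (μ t) * m1 t) := hB1.deriv
    have e2 := (e1.trans hB2).deriv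
    rw [e2.eq_of_nhds, hB3]
  -- compare
  have key0 : deriv (deriv (deriv (fun t => g t * w t))) 0 =
      deriv (deriv (deriv (fun t => g (μ t)))) 0 := (hAB.deriv.deriv.deriv).eq_of_nhds
  rw [dA, dB, hμ0, hg0, hg1_0, hw0, hw1_0, hm1_0, hν0] at key0
  have key2 : R * g3 0 + 6 * (1 - m) * g2 0 * σ = 0 := by
    field_simp at key0
    linarith
  linear_combination key2 - R * hcC - 6 * (1 - m) * σ * hbH
end
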